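/- Fix θ₀ = (γ₀, μ₀, σ₀) ∈ (−1/2, ∞) × ℝ × (0, ∞) and define m_θ(x) = 2 log((p_θ(x) + p_{θ₀}(x))/(2 p_{θ₀}(x))) for x with p_{θ₀}(x) > 0, where p_θ is the GEV density. Then the map θ ↦ ∫ m_θ dP_{θ₀} attains a unique maximum over (−1/2, ∞) × ℝ × (0, ∞) at θ = θ₀; that is, ∫ m_θ dP_{θ₀} < ∫ m_{θ₀} dP_{θ₀} = 0 for every θ ∈ (−1/2, ∞) × ℝ × (0, ∞) with θ ≠ θ₀. -/

import Mathlib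

open MeasureTheory Filter Set
open scoped ENNReal NNReal

/-- `u_γ(z)` for the GEV family. -/
noncomputable def gevU (γ z : ℝ) : ℝ :=
  if γ = 0 then Real.exp (-z) else (1 + γ * z) ^ (-γ⁻¹)

/-- Lebesgue density of the GEV distribution with parameter `θ = (γ, μ, σ)`. -/
noncomputable def gevDensity (θ : ℝ × ℝ × ℝ) (x : ℝ) : ℝ :=
  if 0 < θ.2.2 + θ.1 * (x - θ.2.1) then
    (θ.2.2)⁻¹ * Real.exp (-(gevU θ.1 ((x - θ.2.1) / θ.2.2))) *
      gevU θ.1 ((x - θ.2.1) / θ.2.2) ^ (θ.1 + 1)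
  else 0

/-- The GEV probability measure with parameter `θ`. -/
noncomputable def gevMeasure (θ : ℝ × ℝ × ℝ) : Measure ℝ :=
  MeasureTheory.volume.withDensity fun x => ENNReal.ofReal (gevDensity θ x)

/-- The modified criterion function `m_θ = 2 log((p_θ + p_{θ₀})/(2 p_{θ₀}))`
relative to the reference parameter `θ₀` (meaningful where `p_{θ₀} > 0`). -/
noncomputable def gevM (θ₀ θ : ℝ × ℝ × ℝ) (x : ℝ) : ℝ :=
  2 * Real.log ((gevDensity θ x + gevDensity θ₀ x) / (2 * gevDensity θ₀ x))


namespace GevAux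

def gsupp (θ : ℝ × ℝ × ℝ) : Set ℝ := {x | 0 < θ.2.2 + θ.1 * (x - θ.2.1)}

noncomputable def gU (θ : ℝ × ℝ × ℝ) (x : ℝ) : ℝ := gevU θ.1 ((x - θ.2.1) / θ.2.2)

variable {θ : ℝ × ℝ × ℝ} {x : ℝ}

lemma gsupp_isOpen : IsOpen (gsupp θ) :=
  isOpen_lt continuous_const (by continuity)

lemma gsupp_measurableSet : MeasurableSet (gsupp θ) := gsupp_isOpen.measurableSet

lemma gsupp_convex : Convex ℝ (gsupp θ) := by
  rw [convex_iff_ordConnected]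
  constructor
  intro x hx y hy z hz
  simp only [gsupp, mem_setOf_eq] at *
  rcases le_total 0 θ.1 with h | h
  · nlinarith [hz.1, hz.2]
  · nlinarith [hz.1, hz.2]

lemma base_pos (hσ : 0 < θ.2.2) (hx : x ∈ gsupp θ) :
    0 < 1 + θ.1 * ((x - θ.2.1) / θ.2.2) := by
  have h : 1 + θ.1 * ((x - θ.2.1) / θ.2.2) = (θ.2.2 + θ.1 * (x - θ.2.1)) / θ.2.2 := by
    field_simp
  rw [h]
  exact div_pos hx hσ

lemma gU_pos (hσ : 0 < θ.2.2) (hx : x ∈ gsupp θ) : 0 < gU θ x := by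
  unfold gU gevU
  split
  · exact Real.exp_pos _
  · exact Real.rpow_pos_of_pos (base_pos hσ hx) _

lemma density_off (hx : x ∉ gsupp θ) : gevDensity θ x = 0 := if_neg hx

lemma density_on (hx : x ∈ gsupp θ) :
    gevDensity θ x = (θ.2.2)⁻¹ * Real.exp (-(gU θ x)) * gU θ x ^ (θ.1 + 1) := if_pos hx

lemma density_nonneg (hσ : 0 < θ.2.2) : 0 ≤ gevDensity θ x := by
  by_cases hx : x ∈ gsupp θ
  · rw [density_on hx]
    have := gU_pos hσ hx
    positivity
  · rw [density_off hx]

lemma density_pos (hσ : 0 < θ.2.2) (hx : x ∈ gsupp θ) : 0 < gevDensity θ x := by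
  rw [density_on hx]
  have := gU_pos hσ hx
  positivity

lemma density_measurable (hσ : 0 < θ.2.2) : Measurable (gevDensity θ) := by
  set E : ℝ → ℝ := fun x => if θ.1 = 0 then Real.exp (-((x - θ.2.1) / θ.2.2))
    else Real.exp (Real.log (1 + θ.1 * ((x - θ.2.1) / θ.2.2)) * (-θ.1⁻¹)) with hE
  have hUE : ∀ x ∈ gsupp θ, gU θ x = E x := by
    intro x hx
    rw [hE]
    unfold gU gevU
    rcases eq_or_ne θ.1 0 with h | h
    · simp only [if_pos h]
    · simp only [if_neg h, Real.rpow_def_of_pos (base_pos hσ hx)]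
  have hEmeas : Measurable E := by
    rw [hE]
    rcases eq_or_ne θ.1 0 with h | h
    · simp only [if_pos h]
      exact Real.measurable_exp.comp (((measurable_id.sub_const _).div_const _).neg)
    · simp only [if_neg h]
      exact Real.measurable_exp.comp ((Real.measurable_log.comp
        ((((measurable_id.sub_const _).div_const _).const_mul _).const_add 1)).mul_const _)
  have heq : gevDensity θ = (gsupp θ).indicator (fun x =>
      (θ.2.2)⁻¹ * Real.exp (-(E x)) * Real.exp (Real.log (E x) * (θ.1 + 1))) := by
    ext x
    by_cases hx : x ∈ gsupp θ
    · rw [density_on hx, indicator_of_mem hx,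
        Real.rpow_def_of_pos (gU_pos hσ hx), hUE x hx]
    · rw [density_off hx, indicator_of_notMem hx]
  rw [heq]
  have mA : Measurable fun x => (θ.2.2)⁻¹ * Real.exp (-(E x)) :=
    (Real.measurable_exp.comp hEmeas.neg).const_mul _
  have mB : Measurable fun x => Real.exp (Real.log (E x) * (θ.1 + 1)) :=
    Real.measurable_exp.comp ((Real.measurable_log.comp hEmeas).mul_const _)
  exact (mA.mul mB).indicator gsupp_measurableSet

lemma hasDerivAt_gU (hσ : 0 < θ.2.2) (hx : x ∈ gsupp θ) :
    HasDerivAt (gU θ) (-((θ.2.2)⁻¹ * gU θ x ^ (θ.1 + 1))) x := by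
  have hz : HasDerivAt (fun y : ℝ => (y - θ.2.1) / θ.2.2) (θ.2.2)⁻¹ x := by
    simpa using ((hasDerivAt_id x).sub_const θ.2.1).div_const θ.2.2
  rcases eq_or_ne θ.1 0 with h | h
  · have hgu : gU θ = fun y => Real.exp (-((y - θ.2.1) / θ.2.2)) := by
      funext y; simp [gU, gevU, h]
    have hd : HasDerivAt (fun y => Real.exp (-((y - θ.2.1) / θ.2.2)))
        (Real.exp (-((x - θ.2.1) / θ.2.2)) * -(θ.2.2)⁻¹) x := (hz.neg).exp
    have hUx : gU θ x = Real.exp (-((x - θ.2.1) / θ.2.2)) := by simp [gU, gevU, h]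
    have hval0 : -((θ.2.2)⁻¹ * gU θ x ^ (θ.1 + 1))
        = Real.exp (-((x - θ.2.1) / θ.2.2)) * -(θ.2.2)⁻¹ := by
      rw [hUx, h, zero_add, Real.rpow_one]; ring
    rw [hval0, hgu]
    exact hd
  · have hbase : 0 < 1 + θ.1 * ((x - θ.2.1) / θ.2.2) := base_pos hσ hx
    have hw : HasDerivAt (fun y : ℝ => 1 + θ.1 * ((y - θ.2.1) / θ.2.2)) (θ.1 * (θ.2.2)⁻¹) x :=
      (hz.const_mul θ.1).const_add 1
    have ho := Real.hasDerivAt_rpow_const (p := -θ.1⁻¹) (Or.inl (ne_of_gt hbase))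
    have hcomp := HasDerivAt.comp x ho hw
    have hgu : ((fun s : ℝ => s ^ (-θ.1⁻¹)) ∘ fun y : ℝ => 1 + θ.1 * ((y - θ.2.1) / θ.2.2))
        = gU θ := by
      funext y; simp [Function.comp, gU, gevU, h]
    have hUx : gU θ x = (1 + θ.1 * ((x - θ.2.1) / θ.2.2)) ^ (-θ.1⁻¹) := by
      simp [gU, gevU, h]
    have hval : -((θ.2.2)⁻¹ * gU θ x ^ (θ.1 + 1))
        = -θ.1⁻¹ * (1 + θ.1 * ((x - θ.2.1) / θ.2.2)) ^ (-θ.1⁻¹ - 1) * (θ.1 * θ.2.2⁻¹) := by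
      rw [hUx, ← Real.rpow_mul hbase.le]
      have hexp : -θ.1⁻¹ * (θ.1 + 1) = -θ.1⁻¹ - 1 := by field_simp; ring
      rw [hexp]
      have hinv : θ.1⁻¹ * θ.1 = 1 := inv_mul_cancel₀ h
      linear_combination ((1 + θ.1 * ((x - θ.2.1) / θ.2.2)) ^ (-θ.1⁻¹ - 1) * θ.2.2⁻¹) * hinv
    rw [hval, ← hgu]
    exact hcomp

lemma strictAntiOn_gU (hσ : 0 < θ.2.2) : StrictAntiOn (gU θ) (gsupp θ) := by
  apply strictAntiOn_of_deriv_neg gsupp_convex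
  · intro y hy
    exact (hasDerivAt_gU hσ hy).continuousAt.continuousWithinAt
  · intro y hy
    rw [gsupp_isOpen.interior_eq] at hy
    rw [(hasDerivAt_gU hσ hy).deriv]
    have h1 : 0 < gU θ y ^ (θ.1 + 1) := Real.rpow_pos_of_pos (gU_pos hσ hy) _
    have h2 : (0:ℝ) < (θ.2.2)⁻¹ := inv_pos.2 hσ
    nlinarith

lemma exists_preimage (hσ : 0 < θ.2.2) {t : ℝ} (ht : 0 < t) :
    ∃ y ∈ gsupp θ, gU θ y = t := by
  rcases eq_or_ne θ.1 0 with h | h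
  · refine ⟨θ.2.1 - θ.2.2 * Real.log t, ?_, ?_⟩
    · simp [gsupp, h, hσ]
    · have hz : (θ.2.1 - θ.2.2 * Real.log t - θ.2.1) / θ.2.2 = -Real.log t := by
        field_simp
        ring
      unfold gU gevU
      rw [if_pos h, hz, neg_neg, Real.exp_log ht]
  · refine ⟨θ.2.1 + θ.2.2 * ((t ^ (-θ.1) - 1) / θ.1), ?_, ?_⟩
    · have hpos : 0 < t ^ (-θ.1) := Real.rpow_pos_of_pos ht _
      have heq : θ.2.2 + θ.1 * (θ.2.1 + θ.2.2 * ((t ^ (-θ.1) - 1) / θ.1) - θ.2.1)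
          = θ.2.2 * t ^ (-θ.1) := by
        field_simp
        ring
      simp only [gsupp, mem_setOf_eq, heq]
      positivity
    · have hz : (θ.2.1 + θ.2.2 * ((t ^ (-θ.1) - 1) / θ.1) - θ.2.1) / θ.2.2
          = (t ^ (-θ.1) - 1) / θ.1 := by
        field_simp
        ring
      have hbase : 1 + θ.1 * ((t ^ (-θ.1) - 1) / θ.1) = t ^ (-θ.1) := by
        field_simp
        ring
      unfold gU gevU
      rw [if_neg h, hz, hbase, ← Real.rpow_mul ht.le, neg_mul_neg,
        mul_inv_cancel₀ h, Real.rpow_one]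

lemma image_supp (hσ : 0 < θ.2.2) : gU θ '' gsupp θ = Ioi 0 := by
  apply Subset.antisymm
  · rintro _ ⟨y, hy, rfl⟩
    exact gU_pos hσ hy
  · intro t ht
    obtain ⟨y, hy, hyt⟩ := exists_preimage hσ ht
    exact ⟨y, hy, hyt⟩

lemma image_inter_Iic (hσ : 0 < θ.2.2) (hx : x ∈ gsupp θ) :
    gU θ '' (gsupp θ ∩ Iic x) = Ici (gU θ x) := by
  apply Subset.antisymm
  · rintro _ ⟨y, ⟨hy, hyx⟩, rfl⟩
    exact (strictAntiOn_gU hσ).antitoneOn hy hx hyx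
  · intro t ht
    have htpos : 0 < t := lt_of_lt_of_le (gU_pos hσ hx) ht
    obtain ⟨y, hy, rfl⟩ := exists_preimage hσ htpos
    refine ⟨y, ⟨hy, ?_⟩, rfl⟩
    rw [mem_Ici] at ht
    by_contra hc
    simp only [mem_Iic, not_le] at hc
    exact absurd ((strictAntiOn_gU hσ) hx hy hc) (not_lt.mpr ht)

lemma density_eq_smul (hσ : 0 < θ.2.2) (hy : x ∈ gsupp θ) :
    |(-((θ.2.2)⁻¹ * gU θ x ^ (θ.1 + 1)))| • Real.exp (-(gU θ x)) = gevDensity θ x := by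
  have h1 : 0 < gU θ x ^ (θ.1 + 1) := Real.rpow_pos_of_pos (gU_pos hσ hy) _
  rw [abs_neg, abs_of_nonneg (by positivity), smul_eq_mul, density_on hy]
  ring

lemma integrableOn_exp_neg_Ioi_zero :
    IntegrableOn (fun t : ℝ => Real.exp (-t)) (Ioi (0:ℝ)) volume := by
  have := exp_neg_integrableOn_Ioi 0 (zero_lt_one (α := ℝ))
  simpa [neg_one_mul] using this

lemma setIntegral_density (hσ : 0 < θ.2.2) {s : Set ℝ} (hsub : s ⊆ gsupp θ)
    (hs : MeasurableSet s) :
    ∫ y in s, gevDensity θ y = ∫ t in gU θ '' s, Real.exp (-t) := by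
  rw [integral_image_eq_integral_abs_deriv_smul hs
    (fun y hy => (hasDerivAt_gU hσ (hsub hy)).hasDerivWithinAt)
    (((strictAntiOn_gU hσ).injOn).mono hsub) (fun t => Real.exp (-t))]
  exact (setIntegral_congr_fun hs (fun y hy => (density_eq_smul hσ (hsub hy)).symm))

lemma integrableOn_density (hσ : 0 < θ.2.2) {s : Set ℝ} (hsub : s ⊆ gsupp θ)
    (hs : MeasurableSet s) : IntegrableOn (gevDensity θ) s volume := by
  have himg : gU θ '' s ⊆ Ioi 0 := by
    rintro _ ⟨y, hy, rfl⟩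
    exact gU_pos hσ (hsub hy)
  have hexp : IntegrableOn (fun t : ℝ => Real.exp (-t)) (gU θ '' s) volume :=
    integrableOn_exp_neg_Ioi_zero.mono_set himg
  have h2 := (integrableOn_image_iff_integrableOn_abs_deriv_smul hs
    (fun y hy => (hasDerivAt_gU hσ (hsub hy)).hasDerivWithinAt)
    (((strictAntiOn_gU hσ).injOn).mono hsub) (fun t => Real.exp (-t))).mp hexp
  exact h2.congr_fun (fun y hy => density_eq_smul hσ (hsub hy)) hs

lemma integrable_density (hσ : 0 < θ.2.2) : Integrable (gevDensity θ) volume := by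
  rw [← integrableOn_univ, ← union_compl_self (gsupp θ)]
  apply IntegrableOn.union (integrableOn_density hσ Subset.rfl gsupp_measurableSet)
  exact (integrableOn_zero).congr_fun (fun y hy => (density_off hy).symm)
    gsupp_measurableSet.compl

lemma setIntegral_density_supp (hσ : 0 < θ.2.2) : ∫ y in gsupp θ, gevDensity θ y = 1 := by
  rw [setIntegral_density hσ Subset.rfl gsupp_measurableSet, image_supp hσ]
  exact integral_exp_neg_Ioi_zero

lemma integral_density (hσ : 0 < θ.2.2) : ∫ y, gevDensity θ y = 1 := by
  rw [← integral_add_compl gsupp_measurableSet (integrable_density hσ)]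
  have h2 : ∫ y in (gsupp θ)ᶜ, gevDensity θ y = 0 := by
    rw [setIntegral_congr_fun gsupp_measurableSet.compl
      (g := fun _ => (0:ℝ)) (fun y hy => density_off hy)]
    simp
  rw [setIntegral_density_supp hσ, h2, add_zero]

lemma isProbability (hσ : 0 < θ.2.2) : IsProbabilityMeasure (gevMeasure θ) := by
  constructor
  rw [gevMeasure, withDensity_apply _ MeasurableSet.univ, Measure.restrict_univ,
    ← ofReal_integral_eq_lintegral_ofReal (integrable_density hσ)
      (ae_of_all _ fun x => density_nonneg hσ),
    integral_density hσ, ENNReal.ofReal_one]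

lemma cdf (hσ : 0 < θ.2.2) (hx : x ∈ gsupp θ) :
    gevMeasure θ (Iic x) = ENNReal.ofReal (Real.exp (-(gU θ x))) := by
  rw [gevMeasure, withDensity_apply _ measurableSet_Iic,
    ← ofReal_integral_eq_lintegral_ofReal (integrable_density hσ).integrableOn
      (ae_restrict_of_ae (ae_of_all _ fun y => density_nonneg hσ))]
  congr 1
  rw [setIntegral_eq_of_subset_of_forall_diff_eq_zero measurableSet_Iic
    inter_subset_right (fun y hy => density_off (fun hmem => hy.2 ⟨hmem, hy.1⟩))]
  rw [setIntegral_density hσ inter_subset_left (gsupp_measurableSet.inter measurableSet_Iic),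
    image_inter_Iic hσ hx, integral_Ici_eq_integral_Ioi, integral_exp_neg_Ioi]

lemma gU_rpow_gamma (hσ : 0 < θ.2.2) (hx : x ∈ gsupp θ) :
    gU θ x ^ θ.1 = θ.2.2 / (θ.2.2 + θ.1 * (x - θ.2.1)) := by
  have hb : (0:ℝ) < θ.2.2 + θ.1 * (x - θ.2.1) := hx
  rcases eq_or_ne θ.1 0 with h | h
  · rw [h, Real.rpow_zero, zero_mul, add_zero, div_self (ne_of_gt hσ)]
  · have hbase : 0 < 1 + θ.1 * ((x - θ.2.1) / θ.2.2) := base_pos hσ hx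
    have hgu : gU θ x = (1 + θ.1 * ((x - θ.2.1) / θ.2.2)) ^ (-θ.1⁻¹) := by
      simp [gU, gevU, h]
    rw [hgu, ← Real.rpow_mul hbase.le, neg_mul, inv_mul_cancel₀ h, Real.rpow_neg_one]
    have hbeq : 1 + θ.1 * ((x - θ.2.1) / θ.2.2) = (θ.2.2 + θ.1 * (x - θ.2.1)) / θ.2.2 := by
      field_simp
    rw [hbeq, inv_div]

lemma hasDerivAt_log_gU (hσ : 0 < θ.2.2) (hx : x ∈ gsupp θ) :
    HasDerivAt (fun y => Real.log (gU θ y)) (-(θ.2.2 + θ.1 * (x - θ.2.1))⁻¹) x := by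
  have hb : (0:ℝ) < θ.2.2 + θ.1 * (x - θ.2.1) := hx
  have hU := hasDerivAt_gU hσ hx
  have hUpos := gU_pos hσ hx
  have hcomp := (Real.hasDerivAt_log (ne_of_gt hUpos)).comp x hU
  refine hcomp.congr_deriv ?_
  symm
  show -(θ.2.2 + θ.1 * (x - θ.2.1))⁻¹ = (gU θ x)⁻¹ * -((θ.2.2)⁻¹ * gU θ x ^ (θ.1 + 1))
  have hsplit : gU θ x ^ (θ.1 + 1) = gU θ x ^ θ.1 * gU θ x := by
    rw [Real.rpow_add hUpos, Real.rpow_one]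
  rw [hsplit, gU_rpow_gamma hσ hx]
  field_simp

lemma identif (θ θ₀ : ℝ × ℝ × ℝ) (hσθ : 0 < θ.2.2) (hσ₀ : 0 < θ₀.2.2)
    (hae : ∀ᵐ x ∂(volume : Measure ℝ), x ∈ gsupp θ₀ → gevDensity θ x = gevDensity θ₀ x) :
    θ = θ₀ := by
  -- the overlap T = S ∩ S' is open and nonempty
  have h1 : ∀ᵐ x ∂(volume : Measure ℝ), x ∉ gsupp θ₀ \ gsupp θ := by
    filter_upwards [hae] with x hx
    rintro ⟨hxS, hxn⟩
    have h2 := hx hxS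
    rw [density_off hxn] at h2
    exact absurd h2.symm (ne_of_gt (density_pos hσ₀ hxS))
  have hSS' : volume (gsupp θ₀ \ gsupp θ) = 0 := by
    rw [ae_iff] at h1
    simp only [not_not] at h1
    simpa only [Set.setOf_mem_eq] using h1
  have hTopen : IsOpen (gsupp θ₀ ∩ gsupp θ) := gsupp_isOpen.inter gsupp_isOpen
  have hTne : (gsupp θ₀ ∩ gsupp θ).Nonempty := by
    set ε := θ₀.2.2 / (|θ₀.1| + 1) with hε_def
    have hεpos : 0 < ε := div_pos hσ₀ (by positivity)
    have hIoo : Ioo θ₀.2.1 (θ₀.2.1 + ε) ⊆ gsupp θ₀ := by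
      intro x hx
      simp only [gsupp, mem_setOf_eq]
      have h1' : 0 < x - θ₀.2.1 := sub_pos.mpr hx.1
      have h2' : x - θ₀.2.1 < ε := by linarith [hx.2]
      have h3 : -|θ₀.1| * (x - θ₀.2.1) ≤ θ₀.1 * (x - θ₀.2.1) :=
        mul_le_mul_of_nonneg_right (neg_abs_le _) h1'.le
      have h4 : |θ₀.1| * (x - θ₀.2.1) ≤ |θ₀.1| * ε :=
        mul_le_mul_of_nonneg_left h2'.le (abs_nonneg _)
      have h5 : |θ₀.1| * ε < θ₀.2.2 := by
        rw [hε_def]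
        rw [show |θ₀.1| * (θ₀.2.2 / (|θ₀.1| + 1)) = θ₀.2.2 * (|θ₀.1| / (|θ₀.1| + 1)) by ring]
        have h6 : |θ₀.1| / (|θ₀.1| + 1) < 1 := by
          rw [div_lt_one (by positivity)]
          linarith
        nlinarith
      nlinarith
    by_contra hc
    rw [not_nonempty_iff_eq_empty] at hc
    have hsub2 : gsupp θ₀ ⊆ gsupp θ₀ \ gsupp θ := by
      intro x hx
      refine ⟨hx, fun hx' => ?_⟩
      have hmem : x ∈ gsupp θ₀ ∩ gsupp θ := mem_inter hx hx'
      rw [hc] at hmem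
      exact hmem
    have hle : volume (Ioo θ₀.2.1 (θ₀.2.1 + ε)) ≤ volume (gsupp θ₀ \ gsupp θ) :=
      measure_mono (hIoo.trans hsub2)
    rw [hSS', Real.volume_Ioo] at hle
    simp only [add_sub_cancel_left] at hle
    exact absurd (le_antisymm hle zero_le) (ne_of_gt (ENNReal.ofReal_pos.mpr hεpos))
  -- densities agree a.e. everywhere, so the measures agree
  have hSp : ∫ y in gsupp θ₀, gevDensity θ y = 1 := by
    rw [setIntegral_congr_ae gsupp_measurableSet (hae.mono fun x hx hxS => hx hxS)]
    exact setIntegral_density_supp hσ₀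
  have hcompl : ∫ y in (gsupp θ₀)ᶜ, gevDensity θ y = 0 := by
    have hadd := integral_add_compl (s := gsupp θ₀) (μ := volume) (f := gevDensity θ)
      gsupp_measurableSet (integrable_density hσθ)
    rw [integral_density hσθ, hSp] at hadd
    linarith
  have hp0c : ∀ᵐ x ∂(volume : Measure ℝ), x ∈ (gsupp θ₀)ᶜ → gevDensity θ x = 0 := by
    have hres : gevDensity θ =ᵐ[volume.restrict (gsupp θ₀)ᶜ] 0 :=
      (integral_eq_zero_iff_of_nonneg_ae
        (ae_restrict_of_ae (ae_of_all _ fun x => density_nonneg hσθ))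
        (integrable_density hσθ).integrableOn).mp hcompl
    exact (ae_restrict_iff' gsupp_measurableSet.compl).mp hres
  have hfull : gevDensity θ =ᵐ[volume] gevDensity θ₀ := by
    filter_upwards [hae, hp0c] with x hx1 hx2
    by_cases hx : x ∈ gsupp θ₀
    · exact hx1 hx
    · rw [hx2 hx, density_off hx]
  have hmeasures : gevMeasure θ = gevMeasure θ₀ :=
    withDensity_congr_ae (hfull.mono fun x hx => by simp only [hx])
  have hUV : ∀ x ∈ gsupp θ₀ ∩ gsupp θ, gU θ x = gU θ₀ x := by
    rintro x ⟨hxS, hxS'⟩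
    have h1' := cdf hσθ hxS'
    have h2' := cdf hσ₀ hxS
    rw [hmeasures, h2'] at h1'
    have h3 := (ENNReal.ofReal_eq_ofReal_iff (Real.exp_pos _).le (Real.exp_pos _).le).mp h1'
    exact neg_inj.mp (Real.exp_eq_exp.mp h3.symm)
  obtain ⟨x₁, hx₁⟩ := hTne
  -- first-order matching on all of T
  have hd1 : ∀ x ∈ gsupp θ₀ ∩ gsupp θ,
      θ.2.2 + θ.1 * (x - θ.2.1) = θ₀.2.2 + θ₀.1 * (x - θ₀.2.1) := by
    intro x hx
    have hA := hasDerivAt_log_gU hσθ hx.2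
    have hB := hasDerivAt_log_gU hσ₀ hx.1
    have heq : (fun y => Real.log (gU θ y)) =ᶠ[nhds x] fun y => Real.log (gU θ₀ y) := by
      filter_upwards [hTopen.mem_nhds hx] with y hy
      rw [hUV y hy]
    have hB' := hB.congr_of_eventuallyEq heq
    have huni := hA.unique hB'
    have := neg_inj.mp huni
    exact inv_inj.mp this
  -- second-order matching at x₁ gives equality of shapes
  have hγeq : θ.1 = θ₀.1 := by
    have hA : HasDerivAt (fun y : ℝ => θ.2.2 + θ.1 * (y - θ.2.1)) θ.1 x₁ := by
      simpa using (((hasDerivAt_id x₁).sub_const θ.2.1).const_mul θ.1).const_add θ.2.2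
    have hB : HasDerivAt (fun y : ℝ => θ₀.2.2 + θ₀.1 * (y - θ₀.2.1)) θ₀.1 x₁ := by
      simpa using (((hasDerivAt_id x₁).sub_const θ₀.2.1).const_mul θ₀.1).const_add θ₀.2.2
    have heq : (fun y : ℝ => θ.2.2 + θ.1 * (y - θ.2.1))
        =ᶠ[nhds x₁] fun y : ℝ => θ₀.2.2 + θ₀.1 * (y - θ₀.2.1) := by
      filter_upwards [hTopen.mem_nhds hx₁] with y hy
      exact hd1 y hy
    exact hA.unique (hB.congr_of_eventuallyEq heq)
  have hb := hd1 x₁ hx₁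
  have hbpos : (0:ℝ) < θ.2.2 + θ.1 * (x₁ - θ.2.1) := hx₁.2
  have hU1 := hUV x₁ hx₁
  rcases eq_or_ne θ.1 0 with h0 | h0
  · -- Gumbel case
    have h0' : θ₀.1 = 0 := hγeq ▸ h0
    have hσeq : θ.2.2 = θ₀.2.2 := by
      rw [h0, h0'] at hb
      simpa using hb
    have hμeq : θ.2.1 = θ₀.2.1 := by
      unfold gU gevU at hU1
      rw [if_pos h0, if_pos h0'] at hU1
      have := Real.exp_eq_exp.mp hU1
      have h2 := neg_inj.mp this
      rw [hσeq] at h2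
      rw [div_eq_div_iff (ne_of_gt hσ₀) (ne_of_gt hσ₀)] at h2
      have h3 := mul_right_cancel₀ (ne_of_gt hσ₀) h2
      linarith
    exact Prod.ext_iff.mpr ⟨hγeq, Prod.ext_iff.mpr ⟨hμeq, hσeq⟩⟩
  · -- non-Gumbel case
    have h0' : θ₀.1 ≠ 0 := hγeq ▸ h0
    have hbase : 0 < 1 + θ.1 * ((x₁ - θ.2.1) / θ.2.2) := base_pos hσθ hx₁.2
    have hbase₀ : 0 < 1 + θ₀.1 * ((x₁ - θ₀.2.1) / θ₀.2.2) := base_pos hσ₀ hx₁.1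
    unfold gU gevU at hU1
    rw [if_neg h0, if_neg h0'] at hU1
    have hBeq : 1 + θ.1 * ((x₁ - θ.2.1) / θ.2.2) = 1 + θ₀.1 * ((x₁ - θ₀.2.1) / θ₀.2.2) := by
      have hr1 : 1 + θ.1 * ((x₁ - θ.2.1) / θ.2.2)
          = ((1 + θ.1 * ((x₁ - θ.2.1) / θ.2.2)) ^ (-θ.1⁻¹)) ^ (-θ.1) := by
        rw [← Real.rpow_mul hbase.le, neg_mul_neg, inv_mul_cancel₀ h0, Real.rpow_one]
      have hr2 : 1 + θ₀.1 * ((x₁ - θ₀.2.1) / θ₀.2.2)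
          = ((1 + θ₀.1 * ((x₁ - θ₀.2.1) / θ₀.2.2)) ^ (-θ₀.1⁻¹)) ^ (-θ.1) := by
        rw [← Real.rpow_mul hbase₀.le, hγeq, neg_mul_neg, inv_mul_cancel₀ h0', Real.rpow_one]
      calc 1 + θ.1 * ((x₁ - θ.2.1) / θ.2.2)
          = ((1 + θ.1 * ((x₁ - θ.2.1) / θ.2.2)) ^ (-θ.1⁻¹)) ^ (-θ.1) := hr1
        _ = ((1 + θ₀.1 * ((x₁ - θ₀.2.1) / θ₀.2.2)) ^ (-θ₀.1⁻¹)) ^ (-θ.1) := by rw [hU1]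
        _ = 1 + θ₀.1 * ((x₁ - θ₀.2.1) / θ₀.2.2) := hr2.symm
    have hb1 : 1 + θ.1 * ((x₁ - θ.2.1) / θ.2.2) = (θ.2.2 + θ.1 * (x₁ - θ.2.1)) / θ.2.2 := by
      field_simp
    have hb2 : 1 + θ₀.1 * ((x₁ - θ₀.2.1) / θ₀.2.2)
        = (θ₀.2.2 + θ₀.1 * (x₁ - θ₀.2.1)) / θ₀.2.2 := by
      field_simp
    rw [hb1, hb2, ← hb] at hBeq
    -- (w / σ) = (w / σ₀) with w > 0 forces σ = σ₀
    have hσeq : θ.2.2 = θ₀.2.2 := by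
      rw [div_eq_div_iff (ne_of_gt hσθ) (ne_of_gt hσ₀)] at hBeq
      exact (mul_left_cancel₀ (ne_of_gt hbpos) hBeq).symm
    have hμeq : θ.2.1 = θ₀.2.1 := by
      rw [hγeq, hσeq] at hb
      have h2 : θ₀.1 * (x₁ - θ.2.1) = θ₀.1 * (x₁ - θ₀.2.1) := by linarith
      have h3 := mul_left_cancel₀ h0' h2
      linarith
    exact Prod.ext_iff.mpr ⟨hγeq, Prod.ext_iff.mpr ⟨hμeq, hσeq⟩⟩

lemma ae_density_pos (hσ₀ : 0 < θ.2.2) :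
    ∀ᵐ x ∂(gevMeasure θ), 0 < gevDensity θ x := by
  have hdmeas : Measurable fun x => ENNReal.ofReal (gevDensity θ x) :=
    (density_measurable hσ₀).ennreal_ofReal
  have : ∀ᵐ x ∂(volume.withDensity fun x => ENNReal.ofReal (gevDensity θ x)),
      0 < gevDensity θ x := by
    rw [ae_withDensity_iff hdmeas]
    refine ae_of_all _ fun x hx => ?_
    rcases (density_nonneg hσ₀ (θ := θ) (x := x)).lt_or_eq with h | h
    · exact h
    · exact absurd (by rw [← h, ENNReal.ofReal_zero]) hx
  exact this

lemma jensen (θ₀ θ : ℝ × ℝ × ℝ) (hσ₀ : 0 < θ₀.2.2) (hσθ : 0 < θ.2.2)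
    (hcon : 0 ≤ ∫ x, gevM θ₀ θ x ∂(gevMeasure θ₀)) :
    ∀ᵐ x ∂(volume : Measure ℝ), x ∈ gsupp θ₀ → gevDensity θ x = gevDensity θ₀ x := by
  haveI : IsProbabilityMeasure (gevMeasure θ₀) := isProbability hσ₀
  set P := gevMeasure θ₀ with hP
  set f : ℝ → ℝ := fun x => (gevDensity θ x + gevDensity θ₀ x) / (2 * gevDensity θ₀ x) with hf
  have hdmeas : Measurable fun x => ENNReal.ofReal (gevDensity θ₀ x) :=
    (density_measurable hσ₀).ennreal_ofReal
  have hae_pos : ∀ᵐ x ∂P, 0 < gevDensity θ₀ x := ae_density_pos hσ₀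
  have hfmeas : Measurable f :=
    ((density_measurable hσθ).add (density_measurable hσ₀)).div
      ((density_measurable hσ₀).const_mul 2)
  have hfnonneg : ∀ x, 0 ≤ f x := fun x => by
    have h1 := density_nonneg hσθ (θ := θ) (x := x)
    have h2 := density_nonneg hσ₀ (θ := θ₀) (x := x)
    positivity
  have hbound : ∀ x, gevDensity θ₀ x * f x ≤ (gevDensity θ x + gevDensity θ₀ x) / 2 ∧ 0 ≤ gevDensity θ₀ x * f x := by
    intro x
    have h1 := density_nonneg hσθ (θ := θ) (x := x)
    have h2 := density_nonneg hσ₀ (θ := θ₀) (x := x)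
    constructor
    · rcases h2.lt_or_eq with h0 | h0
      · have : gevDensity θ₀ x * f x = (gevDensity θ x + gevDensity θ₀ x) / 2 := by
          rw [hf]
          field_simp
        rw [this]
      · rw [← h0, zero_mul]
        positivity
    · exact mul_nonneg h2 (hfnonneg x)
  have hPint : Integrable (fun x => gevDensity θ₀ x * f x) volume := by
    apply Integrable.mono'
      (((integrable_density hσθ).add (integrable_density hσ₀)).div_const 2)
    · exact ((density_measurable hσ₀).mul hfmeas).aestronglyMeasurable
    · refine ae_of_all _ fun x => ?_
      rw [Real.norm_eq_abs, abs_of_nonneg (hbound x).2]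
      exact (hbound x).1
  have hfint : Integrable f P := by
    have : Integrable f (volume.withDensity fun x => ENNReal.ofReal (gevDensity θ₀ x)) := by
      rw [integrable_withDensity_iff hdmeas (ae_of_all _ fun x => ENNReal.ofReal_lt_top)]
      apply hPint.congr
      refine ae_of_all _ fun x => ?_
      show gevDensity θ₀ x * f x = f x * (ENNReal.ofReal (gevDensity θ₀ x)).toReal
      rw [ENNReal.toReal_ofReal (density_nonneg hσ₀)]
      ring
    exact this
  have hIf : ∫ x, f x ∂P ≤ 1 := by
    have hconv : ∫ x, f x ∂P = ∫ x, gevDensity θ₀ x * f x ∂volume := by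
      have h1 : ∫ x, f x ∂(volume.withDensity fun x => ((gevDensity θ₀ x).toNNReal : ℝ≥0∞))
          = ∫ x, ((gevDensity θ₀ x).toNNReal : ℝ≥0) • f x ∂volume :=
        integral_withDensity_eq_integral_smul₀
          ((density_measurable hσ₀).real_toNNReal.aemeasurable) f
      have h2 : ∀ x, ((gevDensity θ₀ x).toNNReal : ℝ≥0) • f x = gevDensity θ₀ x * f x := fun x => by
        rw [NNReal.smul_def, Real.coe_toNNReal _ (density_nonneg hσ₀), smul_eq_mul]
      calc ∫ x, f x ∂P = ∫ x, ((gevDensity θ₀ x).toNNReal : ℝ≥0) • f x ∂volume := h1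
        _ = ∫ x, gevDensity θ₀ x * f x ∂volume := by simp only [h2]
    rw [hconv]
    have hle : ∫ x, gevDensity θ₀ x * f x ∂volume ≤ ∫ x, (gevDensity θ x + gevDensity θ₀ x) / 2 ∂volume :=
      integral_mono hPint
        (((integrable_density hσθ).add (integrable_density hσ₀)).div_const 2)
        (fun x => (hbound x).1)
    have heq : ∫ x, (gevDensity θ x + gevDensity θ₀ x) / 2 ∂volume = 1 := by
      rw [integral_div, integral_add (integrable_density hσθ) (integrable_density hσ₀),
        integral_density hσθ, integral_density hσ₀]
      norm_num
    linarith
  have hhalf : ∀ᵐ x ∂P, (1:ℝ) / 2 ≤ f x := by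
    filter_upwards [hae_pos] with x hx
    have h1 := density_nonneg hσθ (θ := θ) (x := x)
    rw [hf]
    rw [div_le_div_iff₀ (by norm_num) (by positivity)]
    linarith
  have hlogint : Integrable (fun x => Real.log (f x)) P := by
    apply Integrable.mono' ((hfint.abs.add (integrable_const 1)).add
      (integrable_const (Real.log 2)))
    · exact (Real.measurable_log.comp hfmeas).aestronglyMeasurable
    · filter_upwards [hhalf] with x hx
      have hfpos : 0 < f x := lt_of_lt_of_le (by norm_num) hx
      rw [Real.norm_eq_abs]
      rcases le_or_gt 0 (Real.log (f x)) with h | h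
      · rw [abs_of_nonneg h]
        have h1 := Real.log_le_sub_one_of_pos hfpos
        have h2 : f x ≤ |f x| := le_abs_self _
        have h3 : 0 ≤ Real.log 2 := Real.log_nonneg one_le_two
        simp only [Pi.add_apply]
        linarith
      · rw [abs_of_neg h]
        have h1 : Real.log ((1:ℝ)/2) ≤ Real.log (f x) :=
          Real.log_le_log (by norm_num) hx
        have h2 : Real.log ((1:ℝ)/2) = -Real.log 2 := by
          rw [one_div, Real.log_inv]
        have h3 : 0 ≤ |f x| := abs_nonneg _
        simp only [Pi.add_apply]
        linarith
  have hintm : ∫ x, gevM θ₀ θ x ∂P = 2 * ∫ x, Real.log (f x) ∂P := by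
    have hfun : (fun x => gevM θ₀ θ x) = fun x => 2 * Real.log (f x) := rfl
    rw [hfun, integral_const_mul]
  have hlognn : 0 ≤ ∫ x, Real.log (f x) ∂P := by
    rw [hP] at hintm ⊢
    rw [hintm] at hcon
    linarith
  set g : ℝ → ℝ := fun x => f x - 1 - Real.log (f x) with hg
  have hgint : Integrable g P := (hfint.sub (integrable_const 1)).sub hlogint
  have hgnn : 0 ≤ᵐ[P] g := by
    filter_upwards [hhalf] with x hx
    have hfpos : 0 < f x := lt_of_lt_of_le (by norm_num) hx
    have := Real.log_le_sub_one_of_pos hfpos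
    simp only [hg, Pi.zero_apply]
    linarith
  have hgval : ∫ x, g x ∂P = ∫ x, f x ∂P - 1 - ∫ x, Real.log (f x) ∂P := by
    have e1 : Integrable (fun x => f x - 1) P := hfint.sub (integrable_const 1)
    have e0 : (fun x => g x) = fun x => (f x - 1) - Real.log (f x) := by
      funext x; simp [hg]
    rw [e0, integral_sub e1 hlogint, integral_sub hfint (integrable_const 1), integral_const]
    simp [measure_univ]
  have hg0 : ∫ x, g x ∂P = 0 := by
    refine le_antisymm ?_ (integral_nonneg_of_ae hgnn)
    rw [hgval]
    linarith
  have hgae : g =ᵐ[P] 0 := (integral_eq_zero_iff_of_nonneg_ae hgnn hgint).mp hg0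
  have hfeq1 : ∀ᵐ x ∂P, f x = 1 := by
    filter_upwards [hgae, hhalf] with x h1 h2
    have hfpos : 0 < f x := lt_of_lt_of_le (by norm_num) h2
    by_contra hne
    have := Real.log_lt_sub_one_of_pos hfpos hne
    have h1' : f x - 1 - Real.log (f x) = 0 := h1
    linarith
  have hppae : ∀ᵐ x ∂P, gevDensity θ x = gevDensity θ₀ x := by
    filter_upwards [hfeq1, hae_pos] with x h1 h2
    have h2p : (2:ℝ) * gevDensity θ₀ x ≠ 0 := by positivity
    have h3 := (div_eq_one_iff_eq h2p).mp h1
    linarith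
  have hvol : ∀ᵐ x ∂(volume : Measure ℝ), ENNReal.ofReal (gevDensity θ₀ x) ≠ 0 → gevDensity θ x = gevDensity θ₀ x := by
    have : ∀ᵐ x ∂(volume.withDensity fun x => ENNReal.ofReal (gevDensity θ₀ x)), gevDensity θ x = gevDensity θ₀ x := hppae
    exact (ae_withDensity_iff hdmeas).mp this
  filter_upwards [hvol] with x hx hxS
  exact hx (ENNReal.ofReal_pos.mpr (density_pos hσ₀ hxS)).ne'

end GevAux

/-- **Unique maximizer of `θ ↦ P_{θ₀} m_θ`** over `(−1/2, ∞) × ℝ × (0, ∞)`: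
the maximum value `0` is attained at `θ = θ₀` only; that is,
`∫ m_θ dP_{θ₀} < ∫ m_{θ₀} dP_{θ₀} = 0` for every admissible `θ ≠ θ₀`. -/
theorem gev_m_unique_max (θ₀ : ℝ × ℝ × ℝ) (hγ : -(1/2) < θ₀.1) (hσ : 0 < θ₀.2.2) :
    (∫ x, gevM θ₀ θ₀ x ∂(gevMeasure θ₀)) = 0 ∧
    ∀ θ : ℝ × ℝ × ℝ, -(1/2) < θ.1 → 0 < θ.2.2 → θ ≠ θ₀ →
      (∫ x, gevM θ₀ θ x ∂(gevMeasure θ₀)) < 0 := by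
  constructor
  · have hae_pos := GevAux.ae_density_pos (θ := θ₀) hσ
    have hm0 : gevM θ₀ θ₀ =ᵐ[gevMeasure θ₀] fun _ => (0:ℝ) := by
      filter_upwards [hae_pos] with x hx
      unfold gevM
      have h2 : (2:ℝ) * gevDensity θ₀ x ≠ 0 := by positivity
      rw [show gevDensity θ₀ x + gevDensity θ₀ x = 2 * gevDensity θ₀ x by ring,
        div_self h2, Real.log_one, mul_zero]
    rw [integral_congr_ae hm0, integral_zero]
  · intro θ hγθ hσθ hne
    by_contra hcon
    push_neg at hcon
    exact hne (GevAux.identif θ θ₀ hσθ hσ (GevAux.jensen θ₀ θ hσ hσθ hcon))
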